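/- Let Γ be a finite simple graph and w ∈ W_Γ. Define Link(w) = Link(Λ_w) where Λ_w is the set of letters occurring in a reduced expression for w. Then Link(w) equals the set of vertices u ∈ Γ \ Λ_w such that uw = wu in W_Γ. -/

import Mathlib

def racgRels {V : Type*} (G : SimpleGraph V) : Set (FreeGroup V) :=
  {r | (∃ v, r = FreeGroup.of v * FreeGroup.of v) ∨
    ∃ u v, G.Adj u v ∧ r = FreeGroup.of u * FreeGroup.of v * FreeGroup.of u * FreeGroup.of v}

abbrev RACG {V : Type*} (G : SimpleGraph V) : Type _ := PresentedGroup (racgRels G)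

def racgGen {V : Type*} (G : SimpleGraph V) (v : V) : RACG G := PresentedGroup.of v

def specialSubgroup {V : Type*} (G : SimpleGraph V) (S : Set V) : Subgroup (RACG G) :=
  Subgroup.closure (racgGen G '' S)

def linkSet {V : Type*} (G : SimpleGraph V) (S : Set V) : Set V :=
  {u | ∀ s ∈ S, G.Adj u s}

noncomputable def wordLength {V : Type*} (G : SimpleGraph V) (g : RACG G) : ℕ :=
  sInf {n | ∃ l : List V, l.length = n ∧ (l.map (racgGen G)).prod = g}

lemma racgGen_sq {V : Type*} (G : SimpleGraph V) (v : V) :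
    racgGen G v * racgGen G v = 1 := by
  have h : (QuotientGroup.mk (FreeGroup.of v * FreeGroup.of v) :
      PresentedGroup (racgRels G)) = 1 := by
    rw [QuotientGroup.eq_one_iff]
    exact Subgroup.subset_normalClosure (Or.inl ⟨v, rfl⟩)
  simp only [racgGen, PresentedGroup.of, ← map_mul]
  exact h

lemma racgGen_comm {V : Type*} (G : SimpleGraph V) {u v : V} (h : G.Adj u v) :
    racgGen G u * racgGen G v * racgGen G u * racgGen G v = 1 := by
  have h' : (QuotientGroup.mk (FreeGroup.of u * FreeGroup.of v * FreeGroup.of u * FreeGroup.of v) :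
      PresentedGroup (racgRels G)) = 1 := by
    rw [QuotientGroup.eq_one_iff]
    exact Subgroup.subset_normalClosure (Or.inr ⟨u, v, h, rfl⟩)
  simp only [racgGen, PresentedGroup.of, ← map_mul]
  exact h'

lemma racg_induce_lift {V : Type*} (G : SimpleGraph V) {S : Set V} {H : Type*} [Group H]
    (f : S → H) (hsq : ∀ v : S, f v * f v = 1)
    (hcomm : ∀ u v : S, G.Adj ↑u ↑v → f u * f v * f u * f v = 1) :
    ∀ r ∈ racgRels (G.induce S), FreeGroup.lift f r = 1 := by
  rintro r (⟨v, rfl⟩ | ⟨u, v, hadj, rfl⟩)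
  · simpa [map_mul] using hsq v
  · have h' : G.Adj ↑u ↑v := hadj
    simpa [map_mul] using hcomm u v h'

/-- The canonical homomorphism between special subgroups induced by an inclusion of
vertex sets. -/
def racgMapHom {V : Type*} (G : SimpleGraph V) {S T : Set V} (h : S ⊆ T) :
    RACG (G.induce S) →* RACG (G.induce T) :=
  PresentedGroup.toGroup (f := fun v : S => racgGen (G.induce T) ⟨v.1, h v.2⟩)
    (racg_induce_lift G _
      (fun v => racgGen_sq _ _)
      (fun u v hadj => racgGen_comm (G.induce T) (by exact hadj)))

/-- The canonical homomorphism from the special subgroup on `S` to the full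
right-angled Coxeter group. -/
def racgInclHom {V : Type*} (G : SimpleGraph V) (S : Set V) :
    RACG (G.induce S) →* RACG G :=
  PresentedGroup.toGroup (f := fun v : S => racgGen G ↑v)
    (racg_induce_lift G _
      (fun v => racgGen_sq _ _)
      (fun u v hadj => racgGen_comm G hadj))

/-- The set of letters occurring in some reduced expression of `g`. -/
def lettersOf {V : Type*} (G : SimpleGraph V) (g : RACG G) : Set V :=
  {v | ∃ l : List V, (l.map (racgGen G)).prod = g ∧ l.length = wordLength G g ∧ v ∈ l}

section RacgAux

variable {V : Type*} (G : SimpleGraph V)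

open Classical in
/-- The Coxeter matrix of the RACG of `G`. -/
noncomputable def racgMatrix : CoxeterMatrix V where
  M := Matrix.of fun i j => if i = j then 1 else if G.Adj i j then 2 else 0
  isSymm := by
    unfold Matrix.IsSymm
    ext i j
    simp only [Matrix.transpose_apply, Matrix.of_apply]
    by_cases h : i = j
    · simp [h]
    · simp [h, Ne.symm h, G.adj_comm]
  diagonal i := by simp
  off_diagonal i j h := by
    simp only [Matrix.of_apply, if_neg h]
    split <;> simp

lemma racgMatrix_diag (i : V) : racgMatrix G i i = 1 := (racgMatrix G).diagonal i

lemma racgMatrix_adj {i j : V} (h : G.Adj i j) : racgMatrix G i j = 2 := by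
  have hne : i ≠ j := G.ne_of_adj h
  simp [racgMatrix, Matrix.of_apply, hne, h]

lemma racgMatrix_nadj {i j : V} (hne : i ≠ j) (h : ¬ G.Adj i j) : racgMatrix G i j = 0 := by
  simp [racgMatrix, Matrix.of_apply, hne, h]

lemma racgGen_comm' {u v : V} (h : G.Adj u v) :
    racgGen G u * racgGen G v = racgGen G v * racgGen G u := by
  have h1 := racgGen_comm G h
  have h2 := racgGen_sq G u
  have h3 := racgGen_sq G v
  have h4 : (racgGen G u * racgGen G v) * (racgGen G u * racgGen G v) = 1 := by
    rw [← mul_assoc]; exact h1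
  have h5 : (racgGen G u * racgGen G v)⁻¹ = racgGen G u * racgGen G v :=
    inv_eq_of_mul_eq_one_right h4
  have hu : (racgGen G u)⁻¹ = racgGen G u := inv_eq_of_mul_eq_one_right h2
  have hv : (racgGen G v)⁻¹ = racgGen G v := inv_eq_of_mul_eq_one_right h3
  calc racgGen G u * racgGen G v = (racgGen G u * racgGen G v)⁻¹ := h5.symm
    _ = (racgGen G v)⁻¹ * (racgGen G u)⁻¹ := by rw [mul_inv_rev]
    _ = racgGen G v * racgGen G u := by rw [hu, hv]

/-- The hom `RACG G →* (racgMatrix G).Group`. -/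
noncomputable def racgToCox : RACG G →* (racgMatrix G).Group :=
  PresentedGroup.toGroup (f := fun v => (racgMatrix G).simple v) (by
    rintro r (⟨v, rfl⟩ | ⟨u, v, hadj, rfl⟩)
    · simp only [map_mul, FreeGroup.lift_apply_of]
      exact (racgMatrix G).toCoxeterSystem.simple_mul_simple_self v
    · simp only [map_mul, FreeGroup.lift_apply_of]
      have h2 : (racgMatrix G).toCoxeterSystem.simple u * (racgMatrix G).toCoxeterSystem.simple v
          * (racgMatrix G).toCoxeterSystem.simple u * (racgMatrix G).toCoxeterSystem.simple v
          = 1 := by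
        have := (racgMatrix G).toCoxeterSystem.simple_mul_simple_pow u v
        rw [racgMatrix_adj G hadj] at this
        calc _ = ((racgMatrix G).toCoxeterSystem.simple u
              * (racgMatrix G).toCoxeterSystem.simple v) ^ 2 := by
              rw [pow_two, ← mul_assoc]
          _ = 1 := this
      simpa using h2)

/-- The hom `(racgMatrix G).Group →* RACG G`. -/
noncomputable def coxToRacg : (racgMatrix G).Group →* RACG G :=
  PresentedGroup.toGroup (f := fun v => racgGen G v) (by
    rintro r ⟨⟨i, j⟩, rfl⟩
    simp only [Function.uncurry, CoxeterMatrix.relation, map_pow, map_mul, FreeGroup.lift_apply_of]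
    by_cases hij : i = j
    · subst hij
      rw [racgMatrix_diag, pow_one]
      exact racgGen_sq G i
    · by_cases hadj : G.Adj i j
      · rw [racgMatrix_adj G hadj]
        have := racgGen_comm G hadj
        calc (racgGen G i * racgGen G j) ^ 2
            = racgGen G i * racgGen G j * racgGen G i * racgGen G j := by
              rw [pow_two, ← mul_assoc]
          _ = 1 := this
      · rw [racgMatrix_nadj G hij hadj, pow_zero])

lemma racgToCox_gen (v : V) : racgToCox G (racgGen G v) = (racgMatrix G).simple v :=
  PresentedGroup.toGroup.of _

lemma coxToRacg_simple (v : V) : coxToRacg G ((racgMatrix G).simple v) = racgGen G v :=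
  PresentedGroup.toGroup.of _

noncomputable def racgEquivCox : RACG G ≃* (racgMatrix G).Group :=
  MonoidHom.toMulEquiv (racgToCox G) (coxToRacg G)
    (by
      apply PresentedGroup.ext
      intro x
      simp only [MonoidHom.comp_apply, MonoidHom.id_apply]
      have : (PresentedGroup.of x : RACG G) = racgGen G x := rfl
      rw [this, racgToCox_gen, coxToRacg_simple])
    (by
      apply PresentedGroup.ext
      intro x
      show racgToCox G (coxToRacg G ((racgMatrix G).simple x)) = (racgMatrix G).simple x
      rw [coxToRacg_simple, racgToCox_gen])

/-- The Coxeter system on `RACG G`. -/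
noncomputable def racgCS : CoxeterSystem (racgMatrix G) (RACG G) := ⟨racgEquivCox G⟩

@[simp] lemma racgCS_simple (v : V) : (racgCS G).simple v = racgGen G v := by
  show coxToRacg G (PresentedGroup.of v) = racgGen G v
  exact PresentedGroup.toGroup.of _

lemma racg_wordProd (l : List V) :
    (racgCS G).wordProd l = (l.map (racgGen G)).prod := by
  unfold CoxeterSystem.wordProd
  rw [show (racgCS G).simple = racgGen G from funext (racgCS_simple G)]

lemma racg_length_eq (w : RACG G) : wordLength G w = (racgCS G).length w := by
  apply le_antisymm
  · obtain ⟨ω, hlen, hw⟩ := (racgCS G).exists_reduced_word w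
    apply Nat.sInf_le
    exact ⟨ω, (by rw [hw]; exact hlen.symm), by rw [← racg_wordProd, hw]⟩
  · have hne : {n | ∃ l : List V, l.length = n ∧ (l.map (racgGen G)).prod = w}.Nonempty := by
      obtain ⟨ω, hω⟩ := (racgCS G).wordProd_surjective w
      exact ⟨ω.length, ω, rfl, by rw [← racg_wordProd, hω]⟩
    obtain ⟨l, hlen, hl⟩ := Nat.sInf_mem hne
    calc (racgCS G).length w = (racgCS G).length ((racgCS G).wordProd l) := by
          rw [racg_wordProd, hl]
      _ ≤ l.length := (racgCS G).length_wordProd_le l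
      _ = wordLength G w := hlen

lemma racg_lettersOf_eq (w : RACG G) :
    lettersOf G w
      = {v | ∃ l : List V, (racgCS G).IsReduced l ∧ (racgCS G).wordProd l = w ∧ v ∈ l} := by
  ext v
  constructor
  · rintro ⟨l, hprod, hlen, hv⟩
    refine ⟨l, ?_, by rw [racg_wordProd, hprod], hv⟩
    unfold CoxeterSystem.IsReduced
    rw [racg_wordProd, hprod, hlen, racg_length_eq]
  · rintro ⟨l, hred, hprod, hv⟩
    refine ⟨l, by rw [← racg_wordProd, hprod], ?_, hv⟩
    have := hred
    unfold CoxeterSystem.IsReduced at this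
    rw [hprod] at this
    rw [racg_length_eq, this]

----------------------------------------------------------------
-- Part D: the sign action and the strong exchange property
----------------------------------------------------------------

open Classical in
/-- The basic involution of `RACG G × Bool` associated to a generator. -/
noncomputable def flipFun (i : V) : RACG G × Bool → RACG G × Bool :=
  fun p => (racgGen G i * p.1 * racgGen G i, if p.1 = racgGen G i then !p.2 else p.2)

lemma racg_conj_conj (a : V) (t : RACG G) :
    racgGen G a * (racgGen G a * t * racgGen G a) * racgGen G a = t := by
  have ha := racgGen_sq G a
  calc racgGen G a * (racgGen G a * t * racgGen G a) * racgGen G a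
      = (racgGen G a * racgGen G a) * t * (racgGen G a * racgGen G a) := by
        simp only [mul_assoc]
    _ = t := by rw [ha, one_mul, mul_one]

lemma racg_conj_eq_iff (a : V) (t c : RACG G) :
    racgGen G a * t * racgGen G a = c ↔ t = racgGen G a * c * racgGen G a := by
  constructor
  · rintro rfl
    exact (racg_conj_conj G a t).symm
  · rintro rfl
    exact racg_conj_conj G a c

lemma racg_conj_self (a : V) :
    racgGen G a * racgGen G a * racgGen G a = racgGen G a := by
  rw [racgGen_sq, one_mul]

lemma racg_conj_eq_self_iff (a : V) (t : RACG G) :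
    (racgGen G a * t * racgGen G a = racgGen G a) ↔ t = racgGen G a := by
  rw [racg_conj_eq_iff, racg_conj_self]

lemma flipFun_involutive (i : V) : Function.Involutive (flipFun G i) := by
  intro p
  obtain ⟨t, ε⟩ := p
  unfold flipFun
  simp only
  rw [Prod.mk.injEq]
  constructor
  · exact racg_conj_conj G i t
  · have hcond : (racgGen G i * t * racgGen G i = racgGen G i) ↔ t = racgGen G i :=
      racg_conj_eq_self_iff G i t
    by_cases h : t = racgGen G i
    · rw [if_pos h, if_pos (hcond.mpr h), Bool.not_not]
    · rw [if_neg h, if_neg (fun hh => h (hcond.mp hh))]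

open Classical in
/-- The basic involution as a permutation. -/
noncomputable def flipPerm (i : V) : Equiv.Perm (RACG G × Bool) :=
  (flipFun_involutive G i).toPerm

lemma flipPerm_apply (i : V) (p : RACG G × Bool) : flipPerm G i p = flipFun G i p := rfl

lemma flipPerm_sq (i : V) : flipPerm G i * flipPerm G i = 1 := by
  ext p : 1
  show flipFun G i (flipFun G i p) = p
  exact flipFun_involutive G i p

lemma flipPerm_comm {i j : V} (h : G.Adj i j) :
    flipPerm G i * flipPerm G j = flipPerm G j * flipPerm G i := by
  classical
  have hc := racgGen_comm' G h
  ext p : 1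
  show flipFun G i (flipFun G j p) = flipFun G j (flipFun G i p)
  unfold flipFun
  obtain ⟨t, ε⟩ := p
  simp only
  rw [Prod.mk.injEq]
  have hji : racgGen G j * racgGen G i * racgGen G j = racgGen G i := by
    rw [← hc, mul_assoc, racgGen_sq, mul_one]
  have hij : racgGen G i * racgGen G j * racgGen G i = racgGen G j := by
    rw [hc, mul_assoc, racgGen_sq, mul_one]
  constructor
  · -- first components agree
    show racgGen G i * (racgGen G j * t * racgGen G j) * racgGen G i
        = racgGen G j * (racgGen G i * t * racgGen G i) * racgGen G j
    calc racgGen G i * (racgGen G j * t * racgGen G j) * racgGen G i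
        = (racgGen G i * racgGen G j) * t * (racgGen G j * racgGen G i) := by
          simp only [mul_assoc]
      _ = (racgGen G j * racgGen G i) * t * (racgGen G i * racgGen G j) := by
          rw [hc, ← hc]
      _ = racgGen G j * (racgGen G i * t * racgGen G i) * racgGen G j := by
          simp only [mul_assoc]
  · -- second components agree
    show (if racgGen G j * t * racgGen G j = racgGen G i
          then !(if t = racgGen G j then !ε else ε) else (if t = racgGen G j then !ε else ε))
        = (if racgGen G i * t * racgGen G i = racgGen G j
          then !(if t = racgGen G i then !ε else ε) else (if t = racgGen G i then !ε else ε))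
    have h1 : (racgGen G j * t * racgGen G j = racgGen G i) ↔ t = racgGen G i := by
      rw [racg_conj_eq_iff, hji]
    have h2 : (racgGen G i * t * racgGen G i = racgGen G j) ↔ t = racgGen G j := by
      rw [racg_conj_eq_iff, hij]
    rw [if_congr h1 rfl rfl, if_congr h2 rfl rfl]
    by_cases ht1 : t = racgGen G i <;> by_cases ht2 : t = racgGen G j
    · have hs : racgGen G i = racgGen G j := by rw [← ht1, ← ht2]
      simp [ht1, ht2, hs]
    · have hs : racgGen G i ≠ racgGen G j := fun hh => ht2 (ht1.trans hh)
      simp [ht1, ht2, hs]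
    · have hs : racgGen G j ≠ racgGen G i := fun hh => ht1 (ht2.trans hh)
      simp [ht1, ht2, hs]
    · simp [ht1, ht2]

lemma flipPerm_liftable :
    CoxeterMatrix.IsLiftable (racgMatrix G) (flipPerm G) := by
  intro i j
  by_cases hij : i = j
  · subst hij
    rw [racgMatrix_diag, pow_one]
    exact flipPerm_sq G i
  · by_cases hadj : G.Adj i j
    · rw [racgMatrix_adj G hadj, pow_two]
      calc flipPerm G i * flipPerm G j * (flipPerm G i * flipPerm G j)
          = flipPerm G i * flipPerm G j * (flipPerm G j * flipPerm G i) := by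
            rw [flipPerm_comm G hadj]
        _ = flipPerm G i * (flipPerm G j * flipPerm G j) * flipPerm G i := by
            simp only [mul_assoc]
        _ = 1 := by rw [flipPerm_sq, mul_one, flipPerm_sq]
    · rw [racgMatrix_nadj G hij hadj, pow_zero]

/-- The sign action of the RACG. -/
noncomputable def racgSign : RACG G →* Equiv.Perm (RACG G × Bool) :=
  (racgCS G).lift ⟨flipPerm G, flipPerm_liftable G⟩

lemma racgSign_gen (i : V) : racgSign G (racgGen G i) = flipPerm G i := by
  have := (racgCS G).lift_apply_simple (flipPerm_liftable G) i
  rwa [racgCS_simple] at this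

lemma racgSign_fst (w : RACG G) (p : RACG G × Bool) :
    (racgSign G w p).1 = w * p.1 * w⁻¹ := by
  induction w using CoxeterSystem.simple_induction (racgCS G) generalizing p with
  | simple i =>
    rw [racgCS_simple, racgSign_gen]
    show (flipFun G i p).1 = _
    unfold flipFun
    have : (racgGen G i)⁻¹ = racgGen G i := inv_eq_of_mul_eq_one_right (racgGen_sq G i)
    rw [this]
  | one => simp
  | mul w w' hw hw' =>
    rw [map_mul]
    show ((racgSign G w) ((racgSign G w') p)).1 = _
    rw [hw, hw', mul_inv_rev]
    simp only [mul_assoc]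

lemma racgSign_snd_flip (w : RACG G) (t : RACG G) (ε : Bool) :
    racgSign G w (t, !ε) = ((racgSign G w (t, ε)).1, !(racgSign G w (t, ε)).2) := by
  induction w using CoxeterSystem.simple_induction (racgCS G) generalizing t ε with
  | simple i =>
    rw [racgCS_simple, racgSign_gen]
    show flipFun G i (t, !ε) = ((flipFun G i (t, ε)).1, !(flipFun G i (t, ε)).2)
    unfold flipFun
    by_cases h : t = racgGen G i <;> simp [h]
  | one => simp
  | mul w w' hw hw' =>
    rw [map_mul]
    show (racgSign G w) ((racgSign G w') (t, !ε)) = _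
    rw [hw']
    rw [show ((racgSign G w') (t, ε)).1 = ((racgSign G w') (t, ε)).1 from rfl]
    set q := (racgSign G w') (t, ε) with hq
    have : (racgSign G w) (q.1, !q.2) = (((racgSign G w) (q.1, q.2)).1,
        !((racgSign G w) (q.1, q.2)).2) := hw q.1 q.2
    rw [this]
    show _ = ((racgSign G w ((racgSign G w') (t, ε))).1, !(racgSign G w ((racgSign G w') (t, ε))).2)
    rw [show ((racgSign G w') (t, ε)) = (q.1, q.2) from rfl]

/-- The sign cocycle. -/
noncomputable def racgEta (w t : RACG G) : Bool := (racgSign G w (t, false)).2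

lemma racgSign_snd_eq (w t : RACG G) (ε : Bool) :
    (racgSign G w (t, ε)).2 = xor ε (racgEta G w t) := by
  cases ε
  · simp [racgEta]
  · have := racgSign_snd_flip G w t false
    rw [show (true : Bool) = !false from rfl, this]
    simp [racgEta]

lemma racgSign_apply (w t : RACG G) (ε : Bool) :
    racgSign G w (t, ε) = (w * t * w⁻¹, xor ε (racgEta G w t)) := by
  have h1 := racgSign_fst G w (t, ε)
  have h2 := racgSign_snd_eq G w t ε
  exact Prod.ext h1 h2

lemma racgEta_cocycle (w v t : RACG G) :
    racgEta G (w * v) t = xor (racgEta G v t) (racgEta G w (v * t * v⁻¹)) := by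
  have : racgSign G (w * v) (t, false) = racgSign G w (racgSign G v (t, false)) := by
    rw [map_mul]; rfl
  rw [racgEta, this, racgSign_apply G v t false]
  rw [racgSign_apply G w (v * t * v⁻¹) (xor false (racgEta G v t))]
  simp [Bool.xor_comm]

lemma racgEta_one (t : RACG G) : racgEta G 1 t = false := by
  simp [racgEta]

open Classical in
lemma racgEta_gen (i : V) (t : RACG G) :
    racgEta G (racgGen G i) t = if t = racgGen G i then true else false := by
  rw [racgEta, racgSign_gen]
  show (flipFun G i (t, false)).2 = _
  unfold flipFun
  by_cases h : t = racgGen G i <;> simp [h]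

lemma racgEta_inv_rel (w t : RACG G) :
    xor (racgEta G w⁻¹ t) (racgEta G w (w⁻¹ * t * w)) = false := by
  have h := racgEta_cocycle G w w⁻¹ t
  rw [mul_inv_cancel, racgEta_one, inv_inv] at h
  exact h.symm

lemma racgEta_reflection (v : RACG G) (a : V) :
    racgEta G (v * racgGen G a * v⁻¹) (v * racgGen G a * v⁻¹) = true := by
  set t := v * racgGen G a * v⁻¹ with hts
  have hsplit : t = v * (racgGen G a * v⁻¹) := by rw [hts, mul_assoc]
  have hva : v⁻¹ * t * v = racgGen G a := by
    rw [hts]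
    calc v⁻¹ * (v * racgGen G a * v⁻¹) * v
        = (v⁻¹ * v) * racgGen G a * (v⁻¹ * v) := by simp only [mul_assoc]
      _ = racgGen G a := by simp
  have h1 : racgEta G (racgGen G a * v⁻¹) t
      = xor (racgEta G v⁻¹ t) (racgEta G (racgGen G a) (v⁻¹ * t * v)) := by
    have := racgEta_cocycle G (racgGen G a) v⁻¹ t
    rw [this]
    congr 2
    rw [inv_inv]
  have h2 : racgEta G (racgGen G a) (v⁻¹ * t * v) = true := by
    rw [hva, racgEta_gen, if_pos rfl]
  have h3 : (racgGen G a * v⁻¹) * t * (racgGen G a * v⁻¹)⁻¹ = racgGen G a := by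
    rw [mul_inv_rev, inv_inv]
    calc racgGen G a * v⁻¹ * t * (v * (racgGen G a)⁻¹)
        = racgGen G a * (v⁻¹ * t * v) * (racgGen G a)⁻¹ := by simp only [mul_assoc]
      _ = racgGen G a * racgGen G a * (racgGen G a)⁻¹ := by rw [hva]
      _ = racgGen G a := by simp
  have h4 : racgEta G v (racgGen G a) = racgEta G v⁻¹ t := by
    have h := racgEta_inv_rel G v t
    rw [hva] at h
    revert h
    cases racgEta G v⁻¹ t <;> cases racgEta G v (racgGen G a) <;> simp
  have hc := racgEta_cocycle G v (racgGen G a * v⁻¹) t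
  rw [h3, ← hsplit, h1, h2, h4] at hc
  rw [hc]
  cases racgEta G v⁻¹ t <;> simp

lemma racg_ris_cons (i : V) (ω : List V) :
    (racgCS G).rightInvSeq (i :: ω)
      = (((racgCS G).wordProd ω)⁻¹ * (racgCS G).simple i * (racgCS G).wordProd ω)
        :: (racgCS G).rightInvSeq ω := rfl

lemma racgEta_mem_ris (ω : List V) (t : RACG G)
    (h : racgEta G ((racgCS G).wordProd ω) t = true) :
    t ∈ (racgCS G).rightInvSeq ω := by
  induction ω generalizing t with
  | nil =>
    rw [CoxeterSystem.wordProd_nil, racgEta_one] at h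
    exact absurd h (by simp)
  | cons i ω ih =>
    rw [(racgCS G).wordProd_cons, racgCS_simple] at h
    have hco := racgEta_cocycle G (racgGen G i) ((racgCS G).wordProd ω) t
    rw [h] at hco
    rw [racg_ris_cons, List.mem_cons]
    set w' := (racgCS G).wordProd ω with hw'
    by_cases h1 : racgEta G w' t = true
    · exact Or.inr (ih t h1)
    · left
      have h1' : racgEta G w' t = false := by
        revert h1; cases racgEta G w' t <;> simp
      rw [h1', racgEta_gen] at hco
      by_cases h2 : w' * t * w'⁻¹ = racgGen G i
      · rw [racgCS_simple]
        have : t = w'⁻¹ * racgGen G i * w' := by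
          rw [← h2]
          calc t = (w'⁻¹ * w') * t * (w'⁻¹ * w') := by simp
            _ = w'⁻¹ * (w' * t * w'⁻¹) * w' := by simp only [mul_assoc]
        rw [this, mul_assoc]
      · rw [if_neg h2] at hco
        simp at hco
  
lemma racg_isReflection_eta {t : RACG G}
    (ht : ∃ (v : RACG G) (a : V), t = v * racgGen G a * v⁻¹) {w : RACG G}
    (hlt : (racgCS G).length (w * t) < (racgCS G).length w) : racgEta G w t = true := by
  obtain ⟨v, a, rfl⟩ := ht
  set t := v * racgGen G a * v⁻¹ with hts
  have htt : t * t = 1 := by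
    rw [hts]
    calc v * racgGen G a * v⁻¹ * (v * racgGen G a * v⁻¹)
        = v * (racgGen G a * (v⁻¹ * v) * racgGen G a) * v⁻¹ := by simp only [mul_assoc]
      _ = v * (racgGen G a * racgGen G a) * v⁻¹ := by simp
      _ = 1 := by rw [racgGen_sq]; simp
  by_contra hfalse
  have hfalse' : racgEta G w t = false := by
    revert hfalse; cases racgEta G w t <;> simp
  have hco := racgEta_cocycle G w t t
  have httt : t * t * t⁻¹ = t := by rw [htt, one_mul, inv_eq_of_mul_eq_one_right htt]
  rw [httt, hfalse', racgEta_reflection, Bool.xor_false] at hco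
  -- hco : racgEta G (w * t) t = true
  obtain ⟨τ, hτred, hτ⟩ := (racgCS G).exists_reduced_word' (w * t)
  have hmem : t ∈ (racgCS G).rightInvSeq τ := racgEta_mem_ris G τ t (by rw [← hτ]; exact hco)
  have hinv := (racgCS G).isRightInversion_of_mem_rightInvSeq hτred hmem
  rw [← hτ] at hinv
  have : (racgCS G).length (w * t * t) < (racgCS G).length (w * t) := hinv.2
  rw [mul_assoc, htt, mul_one] at this
  omega

lemma racg_left_exchange {k : V} {y : RACG G}
    (hlt : (racgCS G).length (racgGen G k * y) < (racgCS G).length y)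
    {ω : List V} (hred : (racgCS G).IsReduced ω) (hω : (racgCS G).wordProd ω = y) :
    ∃ j, j < ω.length ∧ racgGen G k * y = (racgCS G).wordProd (ω.eraseIdx j) := by
  set t := y⁻¹ * racgGen G k * y with hts
  have h_yt : y * t = racgGen G k * y := by
    rw [hts]
    calc y * (y⁻¹ * racgGen G k * y) = (y * y⁻¹) * racgGen G k * y := by simp only [mul_assoc]
      _ = racgGen G k * y := by simp
  have hrefl : ∃ (v : RACG G) (a : V), t = v * racgGen G a * v⁻¹ :=
    ⟨y⁻¹, k, by rw [hts, inv_inv]⟩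
  have hlt' : (racgCS G).length (y * t) < (racgCS G).length y := by rw [h_yt]; exact hlt
  have heta := racg_isReflection_eta G hrefl hlt'
  have hmem : t ∈ (racgCS G).rightInvSeq ω := racgEta_mem_ris G ω t (by rw [hω]; exact heta)
  rw [List.mem_iff_getElem] at hmem
  obtain ⟨j, hj, hget⟩ := hmem
  have hjlen : j < ω.length := by
    rw [(racgCS G).length_rightInvSeq] at hj
    exact hj
  refine ⟨j, hjlen, ?_⟩
  have := (racgCS G).wordProd_mul_getD_rightInvSeq ω j
  rw [List.getD_eq_getElem _ _ hj, hget, hω, h_yt] at this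
  exact this

----------------------------------------------------------------
-- Part F: the infinite dihedral model and the double descent lemma
----------------------------------------------------------------

/-- Reflection of `ℤ` at `-1/2`. -/
def dihA : Equiv.Perm ℤ :=
  Function.Involutive.toPerm (fun x => -1 - x) (fun x => by ring)

/-- Reflection of `ℤ` at `1/2`. -/
def dihB : Equiv.Perm ℤ :=
  Function.Involutive.toPerm (fun x => 1 - x) (fun x => by ring)

lemma dihA_apply (x : ℤ) : dihA x = -1 - x := rfl
lemma dihB_apply (x : ℤ) : dihB x = 1 - x := rfl

lemma dihA_sq : dihA * dihA = 1 := by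
  ext x
  show dihA (dihA x) = x
  rw [dihA_apply, dihA_apply]; ring

lemma dihB_sq : dihB * dihB = 1 := by
  ext x
  show dihB (dihB x) = x
  rw [dihB_apply, dihB_apply]; ring

open Classical in
/-- The generator images for the dihedral representation killing everything
except `i`, `j`. -/
noncomputable def dihGen (i j : V) : V → Equiv.Perm ℤ :=
  fun v => if v = i then dihA else if v = j then dihB else 1

lemma dihGen_invol (i j : V) (v : V) : dihGen i j v * dihGen i j v = 1 := by
  unfold dihGen
  by_cases h1 : v = i
  · simp only [h1, if_pos rfl]
    exact dihA_sq
  · by_cases h2 : v = j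
    · simp only [if_neg h1, h2, if_pos rfl]
      exact dihB_sq
    · simp [if_neg h1, if_neg h2]

lemma dihGen_liftable {i j : V} (hnadj : ¬ G.Adj i j) :
    CoxeterMatrix.IsLiftable (racgMatrix G) (dihGen i j (V := V)) := by
  intro a b
  by_cases hab : a = b
  · subst hab
    rw [racgMatrix_diag, pow_one]
    exact dihGen_invol i j a
  · by_cases hadj : G.Adj a b
    · rw [racgMatrix_adj G hadj, pow_two]
      -- at least one of `a`, `b` is not in `{i, j}`, or one of the two maps to 1
      have hone : dihGen i j a = 1 ∨ dihGen i j b = 1 := by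
        unfold dihGen
        by_cases ha1 : a = i
        · by_cases hb1 : b = i
          · exact absurd (ha1.trans hb1.symm) hab
          · by_cases hb2 : b = j
            · exact absurd (ha1 ▸ hb2 ▸ hadj) hnadj
            · right; simp [if_neg hb1, if_neg hb2]
        · by_cases ha2 : a = j
          · by_cases hb1 : b = i
            · exact absurd (ha2 ▸ hb1 ▸ hadj) (fun h => hnadj (G.adj_symm h))
            · by_cases hb2 : b = j
              · exact absurd (ha2.trans hb2.symm) hab
              · right; simp [if_neg hb1, if_neg hb2]
          · left; simp [if_neg ha1, if_neg ha2]
      rcases hone with h | h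
      · rw [h, one_mul, dihGen_invol]
      · rw [h, mul_one, dihGen_invol]
    · rw [racgMatrix_nadj G hab hadj, pow_zero]

/-- The dihedral representation. -/
noncomputable def dihMap {i j : V} (hnadj : ¬ G.Adj i j) : RACG G →* Equiv.Perm ℤ :=
  (racgCS G).lift ⟨dihGen i j, dihGen_liftable G hnadj⟩

lemma dihMap_gen {i j : V} (hnadj : ¬ G.Adj i j) (v : V) :
    dihMap G hnadj (racgGen G v) = dihGen i j v := by
  have := (racgCS G).lift_apply_simple (dihGen_liftable G hnadj) v
  rwa [racgCS_simple] at this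

/-- The translation invariant: value at `0`. -/
noncomputable def dihN {i j : V} (hnadj : ¬ G.Adj i j) (w : RACG G) : ℤ :=
  dihMap G hnadj w 0

lemma dihN_bound {i j : V} (hnadj : ¬ G.Adj i j) (c : List V) :
    (dihN G hnadj ((racgCS G).wordProd c)).natAbs ≤ c.length := by
  induction c with
  | nil => simp [dihN, CoxeterSystem.wordProd_nil]
  | cons v c ih =>
    rw [(racgCS G).wordProd_cons, racgCS_simple]
    have hsplit : dihN G hnadj (racgGen G v * (racgCS G).wordProd c)
        = dihGen i j v (dihN G hnadj ((racgCS G).wordProd c)) := by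
      unfold dihN
      rw [map_mul, dihMap_gen]
      rfl
    rw [hsplit]
    set n := dihN G hnadj ((racgCS G).wordProd c) with hn
    unfold dihGen
    simp only [List.length_cons]
    by_cases h1 : v = i
    · rw [if_pos h1, dihA_apply]
      omega
    · by_cases h2 : v = j
      · rw [if_neg h1, if_pos h2, dihB_apply]
        omega
      · rw [if_neg h1, if_neg h2, Equiv.Perm.one_apply]
        omega

lemma dihN_gen_mul {i j : V} (hnadj : ¬ G.Adj i j) (v : V) (w : RACG G) :
    dihN G hnadj (racgGen G v * w) = dihGen i j v (dihN G hnadj w) := by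
  unfold dihN
  rw [map_mul, dihMap_gen]
  rfl

/-- Value of the invariant on alternating words. -/
lemma dihN_alternatingWord {i j : V} (hne : i ≠ j) (hnadj : ¬ G.Adj i j) (m : ℕ) :
    dihN G hnadj ((racgCS G).wordProd (CoxeterSystem.alternatingWord i j m))
      = (if Even m then -(m : ℤ) else (m : ℤ))
    ∧ dihN G hnadj ((racgCS G).wordProd (CoxeterSystem.alternatingWord j i m))
      = (if Even m then (m : ℤ) else -(m : ℤ)) := by
  induction m with
  | zero =>
    constructor <;> simp [CoxeterSystem.alternatingWord, dihN, CoxeterSystem.wordProd_nil]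
  | succ m ih =>
    obtain ⟨ih1, ih2⟩ := ih
    constructor
    · rw [CoxeterSystem.alternatingWord_succ', (racgCS G).wordProd_cons, racgCS_simple,
        dihN_gen_mul G hnadj]
      by_cases hm : Even m
      · rw [if_pos hm] at ih1 ⊢
        rw [ih1]
        unfold dihGen
        rw [if_neg (fun h => hne h.symm), if_pos rfl, dihB_apply]
        have : ¬ Even (m + 1) := by simp [Nat.even_add_one, hm]
        rw [if_neg this]
        push_cast
        ring
      · rw [if_neg hm] at ih1 ⊢
        rw [ih1]
        unfold dihGen
        rw [if_pos rfl, dihA_apply]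
        have : Even (m + 1) := Nat.even_add_one.mpr hm
        rw [if_pos this]
        push_cast
        ring
    · rw [CoxeterSystem.alternatingWord_succ', (racgCS G).wordProd_cons, racgCS_simple,
        dihN_gen_mul G hnadj]
      by_cases hm : Even m
      · rw [if_pos hm] at ih2 ⊢
        rw [ih2]
        unfold dihGen
        rw [if_pos rfl, dihA_apply]
        have : ¬ Even (m + 1) := by simp [Nat.even_add_one, hm]
        rw [if_neg this]
        push_cast
        ring
      · rw [if_neg hm] at ih2 ⊢
        rw [ih2]
        unfold dihGen
        rw [if_neg (fun h => hne h.symm), if_pos rfl, dihB_apply]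
        have : Even (m + 1) := Nat.even_add_one.mpr hm
        rw [if_pos this]
        push_cast
        ring

lemma aw_letters (α β : V) (m : ℕ) :
    ∀ v ∈ CoxeterSystem.alternatingWord α β m, v = α ∨ v = β := by
  induction m with
  | zero => simp [CoxeterSystem.alternatingWord]
  | succ m ih =>
    rw [CoxeterSystem.alternatingWord_succ']
    intro v hv
    rcases List.mem_cons.mp hv with h | h
    · by_cases hm : Even m
      · rw [if_pos hm] at h; exact Or.inr h
      · rw [if_neg hm] at h; exact Or.inl h
    · exact ih v h

lemma aw_prepend (α β : V) (hαβ : α ≠ β) (m : ℕ) (v : V) (hv : v = α ∨ v = β) :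
    ∃ m', racgGen G v * (racgCS G).wordProd (CoxeterSystem.alternatingWord α β m)
        = (racgCS G).wordProd (CoxeterSystem.alternatingWord α β m')
      ∨ racgGen G v * (racgCS G).wordProd (CoxeterSystem.alternatingWord α β m)
        = (racgCS G).wordProd (CoxeterSystem.alternatingWord β α m') := by
  cases m with
  | zero =>
    refine ⟨1, ?_⟩
    have h0 : (CoxeterSystem.alternatingWord α β 0 : List V) = [] := rfl
    rcases hv with rfl | rfl
    · right
      have h1 : (CoxeterSystem.alternatingWord β v 1 : List V) = [v] := by
        rw [CoxeterSystem.alternatingWord_succ']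
        simp [CoxeterSystem.alternatingWord]
      rw [h0, h1, CoxeterSystem.wordProd_nil, mul_one, CoxeterSystem.wordProd_singleton,
        racgCS_simple]
    · left
      have h1 : (CoxeterSystem.alternatingWord α v 1 : List V) = [v] := by
        rw [CoxeterSystem.alternatingWord_succ']
        simp [CoxeterSystem.alternatingWord]
      rw [h0, h1, CoxeterSystem.wordProd_nil, mul_one, CoxeterSystem.wordProd_singleton,
        racgCS_simple]
  | succ m =>
    set k : V := if Even m then β else α with hk
    have hsucc : CoxeterSystem.alternatingWord α β (m + 1)
        = k :: CoxeterSystem.alternatingWord α β m := CoxeterSystem.alternatingWord_succ' α β m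
    by_cases hvk : v = k
    · -- cancellation
      refine ⟨m, Or.inl ?_⟩
      rw [hsucc, (racgCS G).wordProd_cons, racgCS_simple, ← hvk, ← mul_assoc,
        racgGen_sq, one_mul]
    · -- extension
      refine ⟨m + 2, Or.inl ?_⟩
      have hhead : (if Even (m + 1) then β else α) = v := by
        by_cases hm : Even m
        · have h1 : ¬ Even (m + 1) := by simp [Nat.even_add_one, hm]
          rw [if_neg h1]
          rcases hv with rfl | rfl
          · rfl
          · exact absurd (by rw [hk, if_pos hm]) hvk
        · have h1 : Even (m + 1) := Nat.even_add_one.mpr hm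
          rw [if_pos h1]
          rcases hv with rfl | rfl
          · exact absurd (by rw [hk, if_neg hm]) hvk
          · rfl
      have hsucc2 : CoxeterSystem.alternatingWord α β (m + 2)
          = v :: CoxeterSystem.alternatingWord α β (m + 1) := by
        rw [CoxeterSystem.alternatingWord_succ' α β (m + 1), hhead]
      rw [hsucc2, (racgCS G).wordProd_cons, racgCS_simple]

lemma word_to_alternating (i j : V) (hne : i ≠ j) (c : List V)
    (hc : ∀ v ∈ c, v = i ∨ v = j) :
    ∃ m, (racgCS G).wordProd c
        = (racgCS G).wordProd (CoxeterSystem.alternatingWord i j m)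
      ∨ (racgCS G).wordProd c
        = (racgCS G).wordProd (CoxeterSystem.alternatingWord j i m) := by
  induction c with
  | nil => exact ⟨0, Or.inl rfl⟩
  | cons v c ih =>
    obtain ⟨m, hm⟩ := ih (fun w hw => hc w (List.mem_cons_of_mem v hw))
    have hv : v = i ∨ v = j := hc v (List.mem_cons_self)
    rw [(racgCS G).wordProd_cons, racgCS_simple]
    rcases hm with h | h
    · rw [h]
      obtain ⟨m', hm'⟩ := aw_prepend G i j hne m v hv
      exact ⟨m', hm'⟩
    · rw [h]
      obtain ⟨m', hm'⟩ := aw_prepend G j i (Ne.symm hne) m v (hv.symm)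
      exact ⟨m', hm'.symm⟩

lemma descent_step {i j : V} (hnadj : ¬ G.Adj i j) (x₀ : RACG G)
    (hmin : ∀ c : List V, (∀ v ∈ c, v = i ∨ v = j) →
      (racgCS G).length x₀ ≤ (racgCS G).length ((racgCS G).wordProd c * x₀))
    (k : V) (c : List V) (hk : k = i ∨ k = j) (hc : ∀ v ∈ c, v = i ∨ v = j)
    (hlen : (racgCS G).length ((racgCS G).wordProd c * x₀) = c.length + (racgCS G).length x₀)
    (hnat : (dihN G hnadj ((racgCS G).wordProd (k :: c))).natAbs = c.length + 1) :
    (racgCS G).length ((racgCS G).wordProd (k :: c) * x₀)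
      = (c.length + 1) + (racgCS G).length x₀ := by
  have hcons : (racgCS G).wordProd (k :: c) * x₀
      = racgGen G k * ((racgCS G).wordProd c * x₀) := by
    rw [(racgCS G).wordProd_cons, racgCS_simple, mul_assoc]
  rcases (racgCS G).length_simple_mul ((racgCS G).wordProd c * x₀) k with h | h
  · rw [hcons, racgCS_simple] at *
    rw [h, hlen]
    omega
  · exfalso
    rw [racgCS_simple] at h
    have hlt : (racgCS G).length (racgGen G k * ((racgCS G).wordProd c * x₀))
        < (racgCS G).length ((racgCS G).wordProd c * x₀) := by omega
    obtain ⟨ω₀, hred₀, hx₀⟩ := (racgCS G).exists_reduced_word' x₀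
    have hlen₀ : ω₀.length = (racgCS G).length x₀ := by
      have := hred₀
      unfold CoxeterSystem.IsReduced at this
      rw [← hx₀] at this
      exact this.symm
    have hπω : (racgCS G).wordProd (c ++ ω₀) = (racgCS G).wordProd c * x₀ := by
      rw [(racgCS G).wordProd_append, ← hx₀]
    have hωred : (racgCS G).IsReduced (c ++ ω₀) := by
      unfold CoxeterSystem.IsReduced
      rw [hπω, hlen, List.length_append, hlen₀]
    obtain ⟨p, hp, hdel⟩ := racg_left_exchange G hlt hωred hπω
    rw [List.length_append] at hp
    by_cases hpc : p < c.length
    · rw [List.eraseIdx_append_of_lt_length hpc] at hdel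
      rw [(racgCS G).wordProd_append, ← hx₀] at hdel
      have hcancel : racgGen G k * (racgCS G).wordProd c
          = (racgCS G).wordProd (c.eraseIdx p) := by
        have h1 : racgGen G k * (racgCS G).wordProd c * x₀
            = (racgCS G).wordProd (c.eraseIdx p) * x₀ := by
          rw [mul_assoc]; exact hdel
        exact mul_right_cancel h1
      have h2 : (racgCS G).wordProd (k :: c) = (racgCS G).wordProd (c.eraseIdx p) := by
        rw [(racgCS G).wordProd_cons, racgCS_simple, hcancel]
      have h3 := dihN_bound G hnadj (c.eraseIdx p)
      rw [← h2, hnat] at h3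
      have h4 : (c.eraseIdx p).length = c.length - 1 := by
        rw [List.length_eraseIdx_of_lt hpc]
      rw [h4] at h3
      omega
    · push_neg at hpc
      rw [List.eraseIdx_append_of_length_le hpc] at hdel
      set q := p - c.length with hq
      have hqlt : q < ω₀.length := by omega
      rw [(racgCS G).wordProd_append] at hdel
      -- hdel : σk * (π c * x₀) = π c * π (ω₀.eraseIdx q)
      set c' : List V := c.reverse ++ k :: c with hc'
      have hc'letters : ∀ v ∈ c', v = i ∨ v = j := by
        intro v hvmem
        rw [hc', List.mem_append, List.mem_reverse, List.mem_cons] at hvmem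
        rcases hvmem with h' | h' | h'
        · exact hc v h'
        · rw [h']; exact hk
        · exact hc v h'
      have hkey : (racgCS G).wordProd c' * x₀ = (racgCS G).wordProd (ω₀.eraseIdx q) := by
        rw [hc', (racgCS G).wordProd_append, (racgCS G).wordProd_reverse]
        rw [(racgCS G).wordProd_cons, racgCS_simple]
        calc ((racgCS G).wordProd c)⁻¹ * (racgGen G k * (racgCS G).wordProd c) * x₀
            = ((racgCS G).wordProd c)⁻¹ * (racgGen G k * ((racgCS G).wordProd c * x₀)) := by
              simp only [mul_assoc]
          _ = ((racgCS G).wordProd c)⁻¹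
              * ((racgCS G).wordProd c * (racgCS G).wordProd (ω₀.eraseIdx q)) := by rw [hdel]
          _ = (racgCS G).wordProd (ω₀.eraseIdx q) := by
              rw [← mul_assoc, inv_mul_cancel, one_mul]
      have hup : (racgCS G).length ((racgCS G).wordProd c' * x₀) ≤ ω₀.length - 1 := by
        rw [hkey]
        calc (racgCS G).length ((racgCS G).wordProd (ω₀.eraseIdx q))
            ≤ (ω₀.eraseIdx q).length := (racgCS G).length_wordProd_le _
          _ = ω₀.length - 1 := by rw [List.length_eraseIdx_of_lt hqlt]
      have hdown := hmin c' hc'letters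
      omega

lemma alt_length {i j : V} (hne : i ≠ j) (hnadj : ¬ G.Adj i j) (x₀ : RACG G)
    (hmin : ∀ c : List V, (∀ v ∈ c, v = i ∨ v = j) →
      (racgCS G).length x₀ ≤ (racgCS G).length ((racgCS G).wordProd c * x₀)) (m : ℕ) :
    (racgCS G).length ((racgCS G).wordProd (CoxeterSystem.alternatingWord i j m) * x₀)
      = m + (racgCS G).length x₀
    ∧ (racgCS G).length ((racgCS G).wordProd (CoxeterSystem.alternatingWord j i m) * x₀)
      = m + (racgCS G).length x₀ := by
  induction m with
  | zero =>
    constructor <;>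
      simp [CoxeterSystem.alternatingWord, CoxeterSystem.wordProd_nil]
  | succ m ih =>
    obtain ⟨ih1, ih2⟩ := ih
    have hlen1 : (CoxeterSystem.alternatingWord i j m : List V).length = m :=
      CoxeterSystem.length_alternatingWord i j m
    have hlen2 : (CoxeterSystem.alternatingWord j i m : List V).length = m :=
      CoxeterSystem.length_alternatingWord j i m
    constructor
    · rw [CoxeterSystem.alternatingWord_succ' i j m]
      have hk : (if Even m then j else i) = i ∨ (if Even m then j else i) = j := by
        by_cases hm : Even m
        · rw [if_pos hm]; exact Or.inr rfl
        · rw [if_neg hm]; exact Or.inl rfl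
      have hstep := descent_step G hnadj x₀ hmin (if Even m then j else i)
        (CoxeterSystem.alternatingWord i j m) hk (aw_letters i j m)
        (by rw [hlen1]; exact ih1)
        (by
          rw [← CoxeterSystem.alternatingWord_succ' i j m]
          rw [(dihN_alternatingWord G hne hnadj (m + 1)).1]
          rw [hlen1]
          by_cases hm1 : Even (m + 1)
          · rw [if_pos hm1]; omega
          · rw [if_neg hm1]; omega)
      rw [hstep, hlen1]
    · rw [CoxeterSystem.alternatingWord_succ' j i m]
      have hk : (if Even m then i else j) = i ∨ (if Even m then i else j) = j := by
        by_cases hm : Even m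
        · rw [if_pos hm]; exact Or.inl rfl
        · rw [if_neg hm]; exact Or.inr rfl
      have hstep := descent_step G hnadj x₀ hmin (if Even m then i else j)
        (CoxeterSystem.alternatingWord j i m) hk (fun v hv => (aw_letters j i m v hv).symm)
        (by rw [hlen2]; exact ih2)
        (by
          rw [← CoxeterSystem.alternatingWord_succ' j i m]
          rw [(dihN_alternatingWord G hne hnadj (m + 1)).2]
          rw [hlen2]
          by_cases hm1 : Even (m + 1)
          · rw [if_pos hm1]; omega
          · rw [if_neg hm1]; omega)
      rw [hstep, hlen2]

lemma racg_double_descent_adj {i j : V} (hne : i ≠ j) (x : RACG G)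
    (hi : (racgCS G).length (racgGen G i * x) < (racgCS G).length x)
    (hj : (racgCS G).length (racgGen G j * x) < (racgCS G).length x) :
    G.Adj i j := by
  by_contra hnadj
  set S : Set ℕ := {n | ∃ c : List V, (∀ v ∈ c, v = i ∨ v = j)
    ∧ (racgCS G).length ((racgCS G).wordProd c * x) = n} with hS
  have hSne : S.Nonempty := ⟨(racgCS G).length x, [], by simp, by
    rw [CoxeterSystem.wordProd_nil, one_mul]⟩
  obtain ⟨c₀, hc₀l, hc₀⟩ := Nat.sInf_mem hSne
  set x₀ := (racgCS G).wordProd c₀ * x with hx₀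
  have hx₀len : (racgCS G).length x₀ = sInf S := hc₀
  have hmin : ∀ c : List V, (∀ v ∈ c, v = i ∨ v = j) →
      (racgCS G).length x₀ ≤ (racgCS G).length ((racgCS G).wordProd c * x₀) := by
    intro c hcl
    have hmem : (racgCS G).length ((racgCS G).wordProd c * x₀) ∈ S := by
      refine ⟨c ++ c₀, ?_, ?_⟩
      · intro v hv
        rcases List.mem_append.mp hv with h | h
        · exact hcl v h
        · exact hc₀l v h
      · rw [(racgCS G).wordProd_append, mul_assoc, ← hx₀]
    rw [hx₀len]
    exact Nat.sInf_le hmem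
  have hx : x = (racgCS G).wordProd c₀.reverse * x₀ := by
    rw [hx₀, (racgCS G).wordProd_reverse, ← mul_assoc, inv_mul_cancel, one_mul]
  obtain ⟨m, hcase⟩ := word_to_alternating G i j hne c₀.reverse
    (fun v hv => hc₀l v (List.mem_reverse.mp hv))
  have hB := alt_length G hne hnadj x₀ hmin
  -- helper for the two symmetric cases
  have main : ∀ (a b : V), (a = i ∧ b = j) ∨ (a = j ∧ b = i) →
      x = (racgCS G).wordProd (CoxeterSystem.alternatingWord a b m) * x₀ → False := by
    intro a b hab hxab
    have hBa : ∀ m', (racgCS G).length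
        ((racgCS G).wordProd (CoxeterSystem.alternatingWord a b m') * x₀)
        = m' + (racgCS G).length x₀ := by
      intro m'
      rcases hab with ⟨rfl, rfl⟩ | ⟨rfl, rfl⟩
      · exact (hB m').1
      · exact (hB m').2
    have hBb : ∀ m', (racgCS G).length
        ((racgCS G).wordProd (CoxeterSystem.alternatingWord b a m') * x₀)
        = m' + (racgCS G).length x₀ := by
      intro m'
      rcases hab with ⟨rfl, rfl⟩ | ⟨rfl, rfl⟩
      · exact (hB m').2
      · exact (hB m').1
    have hia : (racgCS G).length (racgGen G a * x) < (racgCS G).length x := by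
      rcases hab with ⟨rfl, _⟩ | ⟨rfl, _⟩
      · exact hi
      · exact hj
    have hib : (racgCS G).length (racgGen G b * x) < (racgCS G).length x := by
      rcases hab with ⟨_, rfl⟩ | ⟨_, rfl⟩
      · exact hj
      · exact hi
    have hxlen : (racgCS G).length x = m + (racgCS G).length x₀ := by
      rw [hxab]; exact hBa m
    cases m with
    | zero =>
      -- x = x₀ ; prepending `a` must increase the length
      have hx0 : x = x₀ := by
        rw [hxab]
        have : (CoxeterSystem.alternatingWord a b 0 : List V) = [] := rfl
        rw [this, CoxeterSystem.wordProd_nil, one_mul]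
      have h1 : (CoxeterSystem.alternatingWord b a 1 : List V) = [a] := by
        rw [CoxeterSystem.alternatingWord_succ']
        simp [CoxeterSystem.alternatingWord]
      have hlen1a : (racgCS G).length (racgGen G a * x₀) = 1 + (racgCS G).length x₀ := by
        have h2 := hBb 1
        rw [h1, CoxeterSystem.wordProd_singleton, racgCS_simple] at h2
        exact h2
      rw [hx0] at hia hxlen
      omega
    | succ m' =>
      -- the first letter of the alternating word
      by_cases hm' : Even m'
      · -- head is `b`; prepending `a` extends the word
        have hne1 : ¬ Even (m' + 1) := by simp [Nat.even_add_one, hm']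
        have hext : (CoxeterSystem.alternatingWord a b (m' + 2) : List V)
            = a :: CoxeterSystem.alternatingWord a b (m' + 1) := by
          rw [CoxeterSystem.alternatingWord_succ' a b (m' + 1), if_neg hne1]
        have : (racgCS G).length (racgGen G a * x) = (m' + 2) + (racgCS G).length x₀ := by
          have h2 := hBa (m' + 2)
          rw [hext, (racgCS G).wordProd_cons, racgCS_simple, mul_assoc, ← hxab] at h2
          exact h2
        omega
      · -- head is `a`; prepending `b` extends the word
        have hev : Even (m' + 1) := Nat.even_add_one.mpr hm'
        have hext : (CoxeterSystem.alternatingWord a b (m' + 2) : List V)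
            = b :: CoxeterSystem.alternatingWord a b (m' + 1) := by
          rw [CoxeterSystem.alternatingWord_succ' a b (m' + 1), if_pos hev]
        have : (racgCS G).length (racgGen G b * x) = (m' + 2) + (racgCS G).length x₀ := by
          have h2 := hBa (m' + 2)
          rw [hext, (racgCS G).wordProd_cons, racgCS_simple, mul_assoc, ← hxab] at h2
          exact h2
        omega
  rcases hcase with h | h
  · exact main i j (Or.inl ⟨rfl, rfl⟩) (by rw [hx, h])
  · exact main j i (Or.inr ⟨rfl, rfl⟩) (by rw [hx, h])

----------------------------------------------------------------
-- Part H: main theorem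
----------------------------------------------------------------

lemma racg_lettersOf_mem {w : RACG G} {l : List V} (hred : (racgCS G).IsReduced l)
    (hprod : (racgCS G).wordProd l = w) {v : V} (hv : v ∈ l) : v ∈ lettersOf G w := by
  rw [racg_lettersOf_eq]
  exact ⟨l, hred, hprod, hv⟩

lemma racg_main_induction : ∀ (n : ℕ) (w : RACG G), (racgCS G).length w = n →
    ∀ u, u ∉ lettersOf G w → racgGen G u * w = w * racgGen G u →
    ∀ ω, (racgCS G).IsReduced ω → (racgCS G).wordProd ω = w → ∀ s ∈ ω, G.Adj u s := by
  intro n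
  induction n using Nat.strong_induction_on with
  | _ n IH =>
    intro w hwlen u hunotin hcomm ω hred hprod s hs
    cases ω with
    | nil => exact absurd hs (List.not_mem_nil)
    | cons c ω' =>
      have hωlen : (c :: ω').length = n := by
        have := hred
        unfold CoxeterSystem.IsReduced at this
        rw [hprod, hwlen] at this
        exact this.symm
      have hω'len : ω'.length = n - 1 := by
        rw [List.length_cons] at hωlen
        omega
      have hn1 : 1 ≤ n := by
        rw [← hωlen]
        simp [List.length_cons]
      -- u is not a descent of w
      have hudesc : (racgCS G).length (racgGen G u * w) = (racgCS G).length w + 1 := by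
        rcases (racgCS G).length_simple_mul w u with h | h
        · rwa [racgCS_simple] at h
        · exfalso
          rw [racgCS_simple] at h
          obtain ⟨τ, hτred, hτ⟩ := (racgCS G).exists_reduced_word' (racgGen G u * w)
          have hτlen : τ.length = n - 1 := by
            have := hτred
            unfold CoxeterSystem.IsReduced at this
            rw [← hτ] at this
            omega
          have hπuτ : (racgCS G).wordProd (u :: τ) = w := by
            rw [(racgCS G).wordProd_cons, racgCS_simple, ← hτ, ← mul_assoc, racgGen_sq, one_mul]
          have huτred : (racgCS G).IsReduced (u :: τ) := by
            unfold CoxeterSystem.IsReduced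
            rw [hπuτ, hwlen, List.length_cons, hτlen]
            omega
          exact hunotin (racg_lettersOf_mem G huτred hπuτ (List.mem_cons_self))
      -- the element x = u * w has u and c as left descents
      have hxlen : (racgCS G).length (racgGen G u * w) = n + 1 := by rw [hudesc, hwlen]
      have hweq : w = racgGen G c * (racgCS G).wordProd ω' := by
        rw [← hprod, (racgCS G).wordProd_cons, racgCS_simple]
      have hw'eq : racgGen G c * w = (racgCS G).wordProd ω' := by
        rw [hweq, ← mul_assoc, racgGen_sq, one_mul]
      have hπω'le : (racgCS G).length ((racgCS G).wordProd ω') ≤ n - 1 := by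
        calc (racgCS G).length ((racgCS G).wordProd ω') ≤ ω'.length :=
            (racgCS G).length_wordProd_le ω'
          _ = n - 1 := hω'len
      have hdescu : (racgCS G).length (racgGen G u * (racgGen G u * w))
          < (racgCS G).length (racgGen G u * w) := by
        have hcan : racgGen G u * (racgGen G u * w) = w := by
          rw [← mul_assoc, racgGen_sq, one_mul]
        rw [hcan, hxlen, hwlen]
        omega
      have hlensimp : (racgCS G).length (racgGen G u) = 1 := by
        have := (racgCS G).length_simple u
        rwa [racgCS_simple] at this
      have hdescc : (racgCS G).length (racgGen G c * (racgGen G u * w))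
          < (racgCS G).length (racgGen G u * w) := by
        have h1 : racgGen G c * (racgGen G u * w) = (racgCS G).wordProd ω' * racgGen G u := by
          rw [hcomm, ← mul_assoc, hw'eq]
        rw [h1, hxlen]
        calc (racgCS G).length ((racgCS G).wordProd ω' * racgGen G u)
            ≤ (racgCS G).length ((racgCS G).wordProd ω')
              + (racgCS G).length (racgGen G u) := (racgCS G).length_mul_le _ _
          _ ≤ (n - 1) + 1 := by rw [hlensimp]; omega
          _ < n + 1 := by omega
      have hunec : u ≠ c := by
        intro h
        exact hunotin (h ▸ racg_lettersOf_mem G hred hprod (List.mem_cons_self))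
      have hadjuc : G.Adj u c :=
        racg_double_descent_adj G hunec (racgGen G u * w) hdescu hdescc
      -- pass to w' = wordProd ω'
      have hw'len : (racgCS G).length ((racgCS G).wordProd ω') = n - 1 := by
        have hge : n ≤ 1 + (racgCS G).length ((racgCS G).wordProd ω') := by
          calc n = (racgCS G).length w := hwlen.symm
            _ = (racgCS G).length (racgGen G c * (racgCS G).wordProd ω') := by rw [← hweq]
            _ ≤ (racgCS G).length (racgGen G c)
                + (racgCS G).length ((racgCS G).wordProd ω') := (racgCS G).length_mul_le _ _
            _ = 1 + (racgCS G).length ((racgCS G).wordProd ω') := by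
                have := (racgCS G).length_simple c
                rw [racgCS_simple] at this
                rw [this]
        omega
      have hw'red : (racgCS G).IsReduced ω' := by
        unfold CoxeterSystem.IsReduced
        rw [hw'len, hω'len]
      have hcommc := racgGen_comm' G hadjuc
      have hw'comm : racgGen G u * (racgCS G).wordProd ω'
          = (racgCS G).wordProd ω' * racgGen G u := by
        calc racgGen G u * (racgCS G).wordProd ω'
            = racgGen G u * (racgGen G c * w) := by rw [hw'eq]
          _ = (racgGen G u * racgGen G c) * w := by rw [mul_assoc]
          _ = (racgGen G c * racgGen G u) * w := by rw [hcommc]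
          _ = racgGen G c * (racgGen G u * w) := by rw [mul_assoc]
          _ = racgGen G c * (w * racgGen G u) := by rw [hcomm]
          _ = (racgGen G c * w) * racgGen G u := by rw [mul_assoc]
          _ = (racgCS G).wordProd ω' * racgGen G u := by rw [hw'eq]
      have hunotin' : u ∉ lettersOf G ((racgCS G).wordProd ω') := by
        intro hmem
        rw [racg_lettersOf_eq] at hmem
        obtain ⟨l', hl'red, hl'prod, hul'⟩ := hmem
        have hl'len : l'.length = n - 1 := by
          have := hl'red
          unfold CoxeterSystem.IsReduced at this
          rw [hl'prod, hw'len] at this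
          exact this.symm
        have hπcl' : (racgCS G).wordProd (c :: l') = w := by
          rw [(racgCS G).wordProd_cons, racgCS_simple, hl'prod, ← hw'eq, ← mul_assoc,
            racgGen_sq, one_mul]
        have hcl'red : (racgCS G).IsReduced (c :: l') := by
          unfold CoxeterSystem.IsReduced
          rw [hπcl', hwlen, List.length_cons, hl'len]
          omega
        exact hunotin (racg_lettersOf_mem G hcl'red hπcl' (List.mem_cons_of_mem c hul'))
      rcases List.mem_cons.mp hs with h | h
      · rw [h]; exact hadjuc
      · exact IH (n - 1) (by omega) ((racgCS G).wordProd ω') hw'len u hunotin' hw'comm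
          ω' hw'red rfl s h

lemma racg_commute_of_letters {u : V} {l : List V}
    (h : ∀ s ∈ l, racgGen G u * racgGen G s = racgGen G s * racgGen G u) :
    racgGen G u * (l.map (racgGen G)).prod = (l.map (racgGen G)).prod * racgGen G u := by
  induction l with
  | nil => simp
  | cons s l ih =>
    rw [List.map_cons, List.prod_cons]
    calc racgGen G u * (racgGen G s * (l.map (racgGen G)).prod)
        = (racgGen G u * racgGen G s) * (l.map (racgGen G)).prod := by rw [mul_assoc]
      _ = (racgGen G s * racgGen G u) * (l.map (racgGen G)).prod := by
          rw [h s (List.mem_cons_self)]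
      _ = racgGen G s * (racgGen G u * (l.map (racgGen G)).prod) := by rw [mul_assoc]
      _ = racgGen G s * ((l.map (racgGen G)).prod * racgGen G u) := by
          rw [ih (fun v hv => h v (List.mem_cons_of_mem s hv))]
      _ = racgGen G s * (l.map (racgGen G)).prod * racgGen G u := by rw [mul_assoc]

end RacgAux

/-- `Link(w)` (the link of the set of letters of `w`) is exactly the set of vertices
outside the letters of `w` whose generator commutes with `w`. -/
theorem racg_link_of_word_eq_commuting_generators
    {V : Type*} [Fintype V] (G : SimpleGraph V) (w : RACG G) :
    linkSet G (lettersOf G w)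
      = {u : V | u ∉ lettersOf G w ∧ racgGen G u * w = w * racgGen G u} := by
  ext u
  simp only [linkSet, Set.mem_setOf_eq]
  constructor
  · intro hu
    have hnotin : u ∉ lettersOf G w := fun hmem => (G.irrefl (hu u hmem))
    refine ⟨hnotin, ?_⟩
    have hne : {n | ∃ l : List V, l.length = n ∧ (l.map (racgGen G)).prod = w}.Nonempty := by
      obtain ⟨ω, hω⟩ := (racgCS G).wordProd_surjective w
      exact ⟨ω.length, ω, rfl, by rw [← racg_wordProd, hω]⟩
    obtain ⟨l, hlen, hprod⟩ := Nat.sInf_mem hne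
    have hmemletters : ∀ s ∈ l, s ∈ lettersOf G w := fun s hsl => ⟨l, hprod, hlen, hsl⟩
    have hcommall : ∀ s ∈ l, racgGen G u * racgGen G s = racgGen G s * racgGen G u :=
      fun s hsl => racgGen_comm' G (hu s (hmemletters s hsl))
    have hq := racg_commute_of_letters G hcommall
    rw [hprod] at hq
    exact hq
  · rintro ⟨hnotin, hcomm⟩ s hs
    rw [racg_lettersOf_eq] at hs
    obtain ⟨l, hred, hprod, hsl⟩ := hs
    exact racg_main_induction G ((racgCS G).length w) w rfl u hnotin hcomm l hred hprod s hsl
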